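/- Let m ≥ 2 and let τ ∈ S_m be a permutation that does not contain 12 tightly. Let l ≥ 2, n ≥ l+2, and let η ∈ S_{n-l+1} avoid τ, with η_a = k for some a and k with 1 ≤ a, k ≤ n-l+1. Define σ ∈ S_n by: σ_i = η_i if i < a and η_i < k; σ_i = η_i + l - 1 if i < a and η_i > k; σ_{a+j} = k + j for j = 0, 1, …, l-1; and for i ≥ a+l, σ_i = η_{i-l+1} if η_{i-l+1} < k and σ_i = η_{i-l+1} + l - 1 if η_{i-l+1} > k. Then σ is a permutation in S_n that avoids τ. -/
import Mathlib

open Filter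

def Contains {n m : ℕ} (σ : Fin n → Fin n) (τ : Fin m → Fin m) : Prop :=
  ∃ f : Fin m → Fin n, StrictMono f ∧ ∀ j k : Fin m, σ (f j) < σ (f k) ↔ τ j < τ k

def Avoids {n m : ℕ} (σ : Fin n → Fin n) (τ : Fin m → Fin m) : Prop :=
  ¬ Contains σ τ

def AvoidSet (n : ℕ) {m : ℕ} (τ : Equiv.Perm (Fin m)) : Set (Equiv.Perm (Fin n)) :=
  {σ : Equiv.Perm (Fin n) | Avoids ⇑σ ⇑τ}

def ClusterAt {n : ℕ} (l k a : ℕ) (σ : Equiv.Perm (Fin n)) : Prop :=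
  (Finset.univ.filter fun i : Fin n => a ≤ (i : ℕ) + 1 ∧ (i : ℕ) + 1 < a + l).image
      (fun i => (σ i : ℕ) + 1) = Finset.Ico k (k + l)

def ClusterEvent (n l k : ℕ) : Set (Equiv.Perm (Fin n)) :=
  {σ : Equiv.Perm (Fin n) | ∃ a : ℕ, 1 ≤ a ∧ a ≤ n - l + 1 ∧ ClusterAt l k a σ}

def ClusterFree {m : ℕ} (τ : Equiv.Perm (Fin m)) : Prop :=
  ∀ l a k : ℕ, 2 ≤ l → l ≤ m - 1 → 1 ≤ a → a + l ≤ m + 1 → ¬ ClusterAt l k a τ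

def ContainsTightly12 {m : ℕ} (τ : Equiv.Perm (Fin m)) : Prop :=
  ∃ i j : Fin m, (j : ℕ) = (i : ℕ) + 1 ∧ (τ j : ℕ) = (τ i : ℕ) + 1

def ContainsTightly21 {m : ℕ} (τ : Equiv.Perm (Fin m)) : Prop :=
  ∃ i j : Fin m, (j : ℕ) = (i : ℕ) + 1 ∧ (τ i : ℕ) = (τ j : ℕ) + 1

def perm123 : Equiv.Perm (Fin 3) := Equiv.refl (Fin 3)

def perm321 : Equiv.Perm (Fin 3) :=
  ⟨![2, 1, 0], ![2, 1, 0], by intro x; fin_cases x <;> rfl, by intro x; fin_cases x <;> rfl⟩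

def p2413 : Equiv.Perm (Fin 4) :=
  ⟨![1, 3, 0, 2], ![2, 0, 3, 1], by intro x; fin_cases x <;> rfl, by intro x; fin_cases x <;> rfl⟩

def p3142 : Equiv.Perm (Fin 4) :=
  ⟨![2, 0, 3, 1], ![1, 3, 0, 2], by intro x; fin_cases x <;> rfl, by intro x; fin_cases x <;> rfl⟩

def SepSet (n : ℕ) : Set (Equiv.Perm (Fin n)) :=
  {σ : Equiv.Perm (Fin n) | Avoids ⇑σ ⇑p2413 ∧ Avoids ⇑σ ⇑p3142}


/-- inserting the block `k, k+1, …, k+l-1` in increasing order at the position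
of the value `k` of a `τ`-avoiding permutation `η` yields a `τ`-avoiding permutation of `[n]`,
provided `τ` does not contain 12 tightly. (Zero-based indexing.) -/
theorem expansion_increasing_avoids (m : ℕ) (hm : 2 ≤ m) (τ : Equiv.Perm (Fin m))
    (hτ : ¬ ContainsTightly12 τ)
    (l n : ℕ) (hl : 2 ≤ l) (hn : l + 2 ≤ n)
    (η : Equiv.Perm (Fin (n - l + 1))) (hη : Avoids ⇑η ⇑τ)
    (a k : Fin (n - l + 1)) (hak : η a = k)
    (σ : Fin n → Fin n)
    (hσ : ∀ i : Fin n, (σ i : ℕ) =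
      if hia : (i : ℕ) < (a : ℕ) then
        (if (η ⟨(i : ℕ), lt_trans hia a.isLt⟩ : ℕ) < (k : ℕ) then
          (η ⟨(i : ℕ), lt_trans hia a.isLt⟩ : ℕ)
        else (η ⟨(i : ℕ), lt_trans hia a.isLt⟩ : ℕ) + l - 1)
      else if (i : ℕ) < (a : ℕ) + l then (k : ℕ) + ((i : ℕ) - (a : ℕ))
      else
        (if (η ⟨(i : ℕ) + 1 - l, by have := i.isLt; omega⟩ : ℕ) < (k : ℕ) then
          (η ⟨(i : ℕ) + 1 - l, by have := i.isLt; omega⟩ : ℕ)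
        else (η ⟨(i : ℕ) + 1 - l, by have := i.isLt; omega⟩ : ℕ) + l - 1)) :
    Function.Bijective σ ∧ Avoids σ ⇑τ := by
  -- basic facts
  have hηk : ∀ p : Fin (n - l + 1), (p : ℕ) ≠ (a : ℕ) → (η p : ℕ) ≠ (k : ℕ) := by
    intro p hp hc
    apply hp
    have h1 : η p = η a := by rw [hak]; exact Fin.ext hc
    exact congrArg Fin.val (η.injective h1)
  have hmid : ∀ i : Fin n, (a : ℕ) ≤ (i : ℕ) → (i : ℕ) < (a : ℕ) + l →
      (σ i : ℕ) = (k : ℕ) + ((i : ℕ) - (a : ℕ)) := by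
    intro i h1 h2
    rw [hσ i, dif_neg (by omega), if_pos h2]
  have hout : ∀ i : Fin n, ¬((a : ℕ) ≤ (i : ℕ) ∧ (i : ℕ) < (a : ℕ) + l) →
      ∃ p : Fin (n - l + 1),
        ((i : ℕ) < (a : ℕ) ∧ (p : ℕ) = (i : ℕ) ∨
          (a : ℕ) + l ≤ (i : ℕ) ∧ (p : ℕ) + l = (i : ℕ) + 1) ∧
        ((η p : ℕ) < (k : ℕ) ∧ (σ i : ℕ) = (η p : ℕ) ∨
          (k : ℕ) < (η p : ℕ) ∧ (σ i : ℕ) = (η p : ℕ) + l - 1) := by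
    intro i hi
    have hs := hσ i
    by_cases h1 : (i : ℕ) < (a : ℕ)
    · rw [dif_pos h1] at hs
      refine ⟨⟨(i : ℕ), lt_trans h1 a.isLt⟩, Or.inl ⟨h1, rfl⟩, ?_⟩
      have hne := hηk ⟨(i : ℕ), lt_trans h1 a.isLt⟩ (by show (i : ℕ) ≠ (a : ℕ); omega)
      split_ifs at hs with h2
      · exact Or.inl ⟨h2, hs⟩
      · exact Or.inr ⟨by omega, hs⟩
    · have h2 : (a : ℕ) + l ≤ (i : ℕ) := by omega
      rw [dif_neg h1, if_neg (by omega)] at hs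
      refine ⟨⟨(i : ℕ) + 1 - l, by have := i.isLt; omega⟩,
        Or.inr ⟨h2, by show ((i : ℕ) + 1 - l) + l = (i : ℕ) + 1; omega⟩, ?_⟩
      have hne := hηk ⟨(i : ℕ) + 1 - l, by have := i.isLt; omega⟩
        (by show (i : ℕ) + 1 - l ≠ (a : ℕ); omega)
      split_ifs at hs with h3
      · exact Or.inl ⟨h3, hs⟩
      · exact Or.inr ⟨by omega, hs⟩
  have hkN : (k : ℕ) < n - l + 1 := k.isLt
  have haN : (a : ℕ) < n - l + 1 := a.isLt
  have hinj : Function.Injective σ := by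
    intro i j hij
    have hv : (σ i : ℕ) = (σ j : ℕ) := by rw [hij]
    by_cases hi : (a : ℕ) ≤ (i : ℕ) ∧ (i : ℕ) < (a : ℕ) + l <;>
      by_cases hj : (a : ℕ) ≤ (j : ℕ) ∧ (j : ℕ) < (a : ℕ) + l
    · have h1 := hmid i hi.1 hi.2
      have h2 := hmid j hj.1 hj.2
      exact Fin.ext (by omega)
    · obtain ⟨p, hp1, hp2⟩ := hout j hj
      have h1 := hmid i hi.1 hi.2
      exfalso
      rcases hp2 with ⟨h3, h4⟩ | ⟨h3, h4⟩ <;> omega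
    · obtain ⟨p, hp1, hp2⟩ := hout i hi
      have h1 := hmid j hj.1 hj.2
      exfalso
      rcases hp2 with ⟨h3, h4⟩ | ⟨h3, h4⟩ <;> omega
    · obtain ⟨p, hp1, hp2⟩ := hout i hi
      obtain ⟨q, hq1, hq2⟩ := hout j hj
      have hpq : (η p : ℕ) = (η q : ℕ) := by
        rcases hp2 with ⟨h3, h4⟩ | ⟨h3, h4⟩ <;> rcases hq2 with ⟨h5, h6⟩ | ⟨h5, h6⟩ <;> omega
      have hpq' : (p : ℕ) = (q : ℕ) := congrArg Fin.val (η.injective (Fin.ext hpq))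
      exact Fin.ext (by
        rcases hp1 with ⟨h3, h4⟩ | ⟨h3, h4⟩ <;> rcases hq1 with ⟨h5, h6⟩ | ⟨h5, h6⟩ <;> omega)
  refine ⟨Finite.injective_iff_bijective.mp hinj, ?_⟩
  rintro ⟨f, hf, hpat⟩
  -- at most one index of f lands in the block
  have step1 : ∀ j j' : Fin m, j < j' → (a : ℕ) ≤ (f j : ℕ) → (f j : ℕ) < (a : ℕ) + l →
      (a : ℕ) ≤ (f j' : ℕ) → (f j' : ℕ) < (a : ℕ) + l → False := by
    intro j j' hjj hb1 hb2 hb3 hb4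
    have hjj' : (j : ℕ) < (j' : ℕ) := Fin.lt_def.mp hjj
    have hjm : (j : ℕ) + 1 < m := by have := j'.isLt; omega
    set p : Fin m := ⟨(j : ℕ) + 1, hjm⟩ with hpdef
    have hjp : j < p := Fin.lt_def.mpr (Nat.lt_succ_self _)
    have hpj' : p ≤ j' := Fin.le_def.mpr (by show (j : ℕ) + 1 ≤ (j' : ℕ); omega)
    have hfp1 : (f j : ℕ) < (f p : ℕ) := Fin.lt_def.mp (hf hjp)
    have hfp2 : (f p : ℕ) ≤ (f j' : ℕ) := Fin.le_def.mp (hf.monotone hpj')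
    have hm1 := hmid (f j) hb1 hb2
    have hm2 := hmid (f p) (by omega) (by omega)
    have h1 : τ j < τ p := (hpat j p).mp (Fin.lt_def.mpr (by omega))
    apply hτ
    refine ⟨j, p, rfl, ?_⟩
    by_contra hne
    have h1' : (τ j : ℕ) < (τ p : ℕ) := Fin.lt_def.mp h1
    have hq1 : (τ j : ℕ) + 1 < m := by have := (τ p).isLt; omega
    set q : Fin m := τ.symm ⟨(τ j : ℕ) + 1, hq1⟩ with hqdef
    have hq2 : (τ q : ℕ) = (τ j : ℕ) + 1 := by rw [hqdef, Equiv.apply_symm_apply]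
    have hs1 : (σ (f j) : ℕ) < (σ (f q) : ℕ) :=
      Fin.lt_def.mp ((hpat j q).mpr (Fin.lt_def.mpr (by omega)))
    have hs2 : (σ (f q) : ℕ) < (σ (f p) : ℕ) :=
      Fin.lt_def.mp ((hpat q p).mpr (Fin.lt_def.mpr (by omega)))
    have hfqb : (a : ℕ) ≤ (f q : ℕ) ∧ (f q : ℕ) < (a : ℕ) + l := by
      by_contra hc
      obtain ⟨r, hr1, hr2⟩ := hout (f q) hc
      rcases hr2 with ⟨h3, h4⟩ | ⟨h3, h4⟩ <;> omega
    have hm3 := hmid (f q) hfqb.1 hfqb.2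
    have hpos1 : (f j : ℕ) < (f q : ℕ) := by omega
    have hpos2 : (f q : ℕ) < (f p : ℕ) := by omega
    have h5 : ¬ (q : ℕ) < (j : ℕ) := fun h => by
      have := Fin.lt_def.mp (hf (Fin.lt_def.mpr h)); omega
    have h6 : ¬ (p : ℕ) < (q : ℕ) := fun h => by
      have := Fin.lt_def.mp (hf (Fin.lt_def.mpr h)); omega
    have h7 : (q : ℕ) ≠ (j : ℕ) := fun h => by
      have hqj : q = j := Fin.ext h
      rw [hqj] at hq2; omega
    have h8 : (q : ℕ) ≠ (p : ℕ) := fun h => by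
      have hqp : q = p := Fin.ext h
      rw [hqp] at hq2; exact hne hq2
    have hpv : (p : ℕ) = (j : ℕ) + 1 := rfl
    omega
  -- construct the collapsed embedding g
  obtain ⟨g, hgval⟩ : ∃ g : Fin m → Fin (n - l + 1), ∀ j : Fin m,
      ((a : ℕ) ≤ (f j : ℕ) ∧ (f j : ℕ) < (a : ℕ) + l ∧ (g j : ℕ) = (a : ℕ) ∧
        (σ (f j) : ℕ) = (k : ℕ) + ((f j : ℕ) - (a : ℕ)) ∧ (η (g j) : ℕ) = (k : ℕ)) ∨
      (((f j : ℕ) < (a : ℕ) ∧ (g j : ℕ) = (f j : ℕ) ∨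
          (a : ℕ) + l ≤ (f j : ℕ) ∧ (g j : ℕ) + l = (f j : ℕ) + 1) ∧
        ((η (g j) : ℕ) < (k : ℕ) ∧ (σ (f j) : ℕ) = (η (g j) : ℕ) ∨
          (k : ℕ) < (η (g j) : ℕ) ∧ (σ (f j) : ℕ) = (η (g j) : ℕ) + l - 1)) := by
    refine ⟨fun j => if h : (a : ℕ) ≤ (f j : ℕ) ∧ (f j : ℕ) < (a : ℕ) + l then a
      else Classical.choose (hout (f j) h), ?_⟩
    intro j
    by_cases h : (a : ℕ) ≤ (f j : ℕ) ∧ (f j : ℕ) < (a : ℕ) + l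
    · left
      refine ⟨h.1, h.2, ?_, hmid _ h.1 h.2, ?_⟩ <;> simp only [dif_pos h]
      rw [hak]
    · right
      have hc := Classical.choose_spec (hout (f j) h)
      simp only [dif_neg h]
      exact hc
  have hcmp : ∀ j j' : Fin m,
      ((σ (f j) : ℕ) < (σ (f j') : ℕ) ↔ (η (g j) : ℕ) < (η (g j') : ℕ)) := by
    intro j j'
    rcases hgval j with ⟨h1, h2, h3, h4, h5⟩ | ⟨hp, hv⟩ <;>
      rcases hgval j' with ⟨h1', h2', h3', h4', h5'⟩ | ⟨hp', hv'⟩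
    · rcases lt_trichotomy j j' with h | h | h
      · exact (step1 j j' h h1 h2 h1' h2').elim
      · subst h; omega
      · exact (step1 j' j h h1' h2' h1 h2).elim
    · rcases hv' with ⟨h6, h7⟩ | ⟨h6, h7⟩ <;> omega
    · rcases hv with ⟨h6, h7⟩ | ⟨h6, h7⟩ <;> omega
    · rcases hv with ⟨h6, h7⟩ | ⟨h6, h7⟩ <;> rcases hv' with ⟨h8, h9⟩ | ⟨h8, h9⟩ <;> omega
  have hgmono : StrictMono g := by
    intro j j' hjj
    have hff : (f j : ℕ) < (f j' : ℕ) := Fin.lt_def.mp (hf hjj)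
    rw [Fin.lt_def]
    rcases hgval j with ⟨h1, h2, h3, h4, h5⟩ | ⟨hp, hv⟩ <;>
      rcases hgval j' with ⟨h1', h2', h3', h4', h5'⟩ | ⟨hp', hv'⟩
    · exact (step1 j j' hjj h1 h2 h1' h2').elim
    · rcases hp' with ⟨h6, h7⟩ | ⟨h6, h7⟩ <;> omega
    · rcases hp with ⟨h6, h7⟩ | ⟨h6, h7⟩ <;> omega
    · rcases hp with ⟨h6, h7⟩ | ⟨h6, h7⟩ <;> rcases hp' with ⟨h8, h9⟩ | ⟨h8, h9⟩ <;> omega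
  exact hη ⟨g, hgmono, fun j j' =>
    ⟨fun h => (hpat j j').mp (Fin.lt_def.mpr ((hcmp j j').mpr (Fin.lt_def.mp h))),
     fun h => Fin.lt_def.mpr ((hcmp j j').mp (Fin.lt_def.mp ((hpat j j').mpr h)))⟩⟩
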